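/- Let N be a positive integer and let ξ, λ be reals with 0 < λ < ξ. Suppose a sequence x_1, ..., x_N of reals satisfies x_j ≥ ξ + (1/j)·Σ_{k=1}^{j-1} x_k − jλ/N for all j ∈ [N]. Then x_j ≥ (ξ − jλ/N)·Σ_{k=1}^{j} 1/k for all j ∈ [N]. -/
import Mathlib

noncomputable def Hh (m : ℕ) : ℝ := ∑ k ∈ Finset.Icc 1 m, (1 : ℝ) / k

lemma Hh_nonneg (m : ℕ) : 0 ≤ Hh m := by
  apply Finset.sum_nonneg; intro k _; positivity

lemma Hh_sum (m : ℕ) : ∑ k ∈ Finset.Icc 1 m, Hh k = ((m : ℝ) + 1) * Hh m - m := by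
  induction m with
  | zero => simp [Hh]
  | succ n ihn =>
    rw [Finset.sum_Icc_succ_top (by omega : 1 ≤ n + 1), ihn]
    have h1 : Hh (n + 1) = Hh n + 1 / ((n : ℝ) + 1) := by
      unfold Hh
      rw [Finset.sum_Icc_succ_top (by omega : 1 ≤ n + 1)]
      push_cast; ring
    rw [h1]
    have hn : (0 : ℝ) < (n : ℝ) + 1 := by positivity
    push_cast
    field_simp
    ring

theorem stmt_0 (N : ℕ) (hN : 0 < N) (ξ lam : ℝ) (hlam : 0 < lam) (hxl : lam < ξ)
    (x : ℕ → ℝ)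
    (hx : ∀ j ∈ Finset.Icc 1 N,
      x j ≥ ξ + (1 / (j : ℝ)) * (∑ k ∈ Finset.Icc 1 (j - 1), x k) - (j : ℝ) * lam / N) :
    ∀ j ∈ Finset.Icc 1 N,
      x j ≥ (ξ - (j : ℝ) * lam / N) * (∑ k ∈ Finset.Icc 1 j, (1 : ℝ) / k) := by
  intro j
  induction j using Nat.strong_induction_on with
  | _ j ih =>
  intro hj
  rw [Finset.mem_Icc] at hj
  obtain ⟨hj1, hjN⟩ := hj
  set m := j - 1 with hm
  have hjm : j = m + 1 := by omega
  have hNpos : (0 : ℝ) < N := by exact_mod_cast hN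
  have hjpos : (0 : ℝ) < j := by exact_mod_cast hj1
  have hxj := hx j (Finset.mem_Icc.mpr ⟨hj1, hjN⟩)
  -- bound the partial sum
  have hsum : (ξ - (j : ℝ) * lam / N) * ∑ k ∈ Finset.Icc 1 m, Hh k
      ≤ ∑ k ∈ Finset.Icc 1 m, x k := by
    rw [Finset.mul_sum]
    apply Finset.sum_le_sum
    intro k hk
    rw [Finset.mem_Icc] at hk
    have hkj : k < j := by omega
    have hkN : k ≤ N := by omega
    have h1 := ih k hkj (Finset.mem_Icc.mpr ⟨hk.1, hkN⟩)
    have h2 : (ξ - (j : ℝ) * lam / N) ≤ (ξ - (k : ℝ) * lam / N) := by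
      have hkj' : (k : ℝ) ≤ j := by exact_mod_cast hkj.le
      have : (k : ℝ) * lam / N ≤ (j : ℝ) * lam / N := by
        gcongr
      linarith
    have h3 := mul_le_mul_of_nonneg_right h2 (Hh_nonneg k)
    have hHk : (∑ i ∈ Finset.Icc 1 k, (1:ℝ)/i) = Hh k := rfl
    rw [hHk] at h1
    linarith
  have hSig : ∑ k ∈ Finset.Icc 1 m, Hh k = (j : ℝ) * Hh m - ((j : ℝ) - 1) := by
    rw [Hh_sum]
    have : (m : ℝ) = (j : ℝ) - 1 := by
      rw [hjm]; push_cast; ring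
    rw [this]; ring
  have hHj : (∑ k ∈ Finset.Icc 1 j, (1:ℝ)/k) = Hh m + 1 / (j : ℝ) := by
    rw [hjm]
    unfold Hh
    rw [Finset.sum_Icc_succ_top (by omega : 1 ≤ m + 1)]
  rw [hHj]
  have hkey : ξ + (1 / (j : ℝ)) * ((ξ - (j : ℝ) * lam / N) * ((j : ℝ) * Hh m - ((j : ℝ) - 1)))
      - (j : ℝ) * lam / N = (ξ - (j : ℝ) * lam / N) * (Hh m + 1 / (j : ℝ)) := by
    field_simp
    ring
  have h4 := mul_le_mul_of_nonneg_left hsum (le_of_lt (by positivity : (0:ℝ) < 1 / (j:ℝ)))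
  rw [hSig] at h4
  have hms : (∑ k ∈ Finset.Icc 1 (j - 1), x k) = ∑ k ∈ Finset.Icc 1 m, x k := rfl
  rw [hms] at hxj
  linarith
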